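/- Let F be an F∞-field and a, b, c, d ∈ F with ac + bd = ad + bc, a + b ≠ 0, and c + d ≠ 0. Let C be the smallest congruence on F containing the pair (a, b) (the intersection of all congruences containing (a,b)). Then every pair (x, y) ∈ C satisfies xc + yd = xd + yc. -/
import Mathlib


class FinfModule (M : Type*) extends Zero M, Neg M, Add M where
  add_assoc : ∀ a b c : M, a + b + c = a + (b + c)
  add_comm : ∀ a b : M, a + b = b + a
  add_idem : ∀ a : M, a + a = a
  add_neg : ∀ a : M, a + -a = 0
  neg_add : ∀ a b : M, -(a + b) = -a + -b
  neg_neg : ∀ a : M, - -a = a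

class FinfAlgebra (A : Type*) extends FinfModule A, Mul A where
  mul_assoc : ∀ a b c : A, a * b * c = a * (b * c)
  mul_zero : ∀ a : A, a * 0 = 0
  zero_mul : ∀ a : A, 0 * a = 0
  neg_mul : ∀ a b : A, -a * b = -(a * b)
  mul_neg : ∀ a b : A, a * -b = -(a * b)
  left_distrib : ∀ a b c : A, a * (b + c) = a * b + a * c
  right_distrib : ∀ a b c : A, (a + b) * c = a * c + b * c

class FinfUnitalAlgebra (A : Type*) extends FinfAlgebra A, One A where
  one_mul : ∀ a : A, 1 * a = a
  mul_one : ∀ a : A, a * 1 = a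

class FinfCommAlgebra (A : Type*) extends FinfUnitalAlgebra A where
  mul_comm : ∀ a b : A, a * b = b * a

structure FinfModCong (M : Type*) [FinfModule M] where
  rel : M → M → Prop
  refl : ∀ a : M, rel a a
  symm : ∀ {a b : M}, rel a b → rel b a
  trans : ∀ {a b c : M}, rel a b → rel b c → rel a c
  add_compat : ∀ {a b : M} (c : M), rel a b → rel (a + c) (b + c)
  neg_compat : ∀ {a b : M}, rel a b → rel (-a) (-b)

structure FinfCong (A : Type*) [FinfAlgebra A] extends FinfModCong A where
  mul_compat : ∀ {a b : A} (c : A), rel a b → rel (a * c) (b * c)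


section FinfAux

variable {F : Type*} [FinfCommAlgebra F]

instance : Std.Associative (α := F) (· + ·) := ⟨FinfModule.add_assoc⟩
instance : Std.Commutative (α := F) (· + ·) := ⟨FinfModule.add_comm⟩
instance : Std.Associative (α := F) (· * ·) := ⟨FinfAlgebra.mul_assoc⟩
instance : Std.Commutative (α := F) (· * ·) := ⟨FinfCommAlgebra.mul_comm⟩

private lemma finf_zero_add (x : F) : 0 + x = 0 := by
  calc 0 + x = (x + -x) + x := by rw [FinfModule.add_neg]
  _ = (x + x) + -x := by ac_rfl
  _ = x + -x := by rw [FinfModule.add_idem]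
  _ = 0 := FinfModule.add_neg x

private lemma finf_add_zero (x : F) : x + 0 = 0 := by
  rw [FinfModule.add_comm]; exact finf_zero_add x

private lemma absorb (r u v : F) (h : u = v) : r + u = (r + u) + v := by
  rw [← h, FinfModule.add_assoc, FinfModule.add_idem]

private lemma mulrel (μ c d p : F) (hp : c + p*d = d + p*c) :
    μ*c + μ*(p*d) = μ*d + μ*(p*c) := by
  rw [← FinfAlgebra.left_distrib, ← FinfAlgebra.left_distrib, hp]

private lemma expand2 (x y z w : F) : (x+y)*(z+w) = x*z + (x*w + (y*z + y*w)) := by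
  rw [FinfAlgebra.right_distrib, FinfAlgebra.left_distrib, FinfAlgebra.left_distrib,
    FinfModule.add_assoc]

private lemma finf_key (c d p q : F) (hp : c + p*d = d + p*c) (hq : c + q*d = d + q*c)
    (hcan : ∀ u v : F, u*(c + p*d) = v*(c + p*d) → u = v) :
    c + p*q*d = d + p*q*c := by
  apply hcan
  calc (c + p*q*d)*(c + p*d)
      = c*c + (c*(p*d) + ((p*q*d)*c + (p*q*d)*(p*d))) := expand2 _ _ _ _
    _ = c*c + c*(d*p) + c*(d*(p*q)) + d*(d*(p*(p*q))) := by ac_rfl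
    _ = (c*(d*(p*q)) + d*(d*(p*(p*q)))) + (c*c + c*(p*d)) := by ac_rfl
    _ = ((c*(d*(p*q)) + d*(d*(p*(p*q)))) + (c*c + c*(p*d))) + (c*d + c*(p*c)) := absorb _ _ _ (mulrel (c) c d p hp)
    _ = c*c + c*(c*p) + c*d + c*(d*p) + c*(d*(p*q)) + d*(d*(p*(p*q))) := by ac_rfl
    _ = (c*c + c*(c*p) + c*d + c*(d*p)) + (d*(p*q)*c + d*(p*q)*(p*d)) := by ac_rfl
    _ = ((c*c + c*(c*p) + c*d + c*(d*p)) + (d*(p*q)*c + d*(p*q)*(p*d))) + (d*(p*q)*d + d*(p*q)*(p*c)) := absorb _ _ _ (mulrel (d*(p*q)) c d p hp)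
    _ = c*c + c*(c*p) + c*d + c*(d*p) + c*(d*(p*(p*q))) + c*(d*(p*q)) + d*(d*(p*(p*q))) + d*(d*(p*q)) := by ac_rfl
    _ = ((c*c + c*(c*p) + c*d + c*(d*p)) + (d*(p*q)*d + d*(p*q)*(p*c))) + (d*(p*q)*c + d*(p*q)*(p*d)) := by ac_rfl
    _ = (c*c + c*(c*p) + c*d + c*(d*p)) + (d*(p*q)*d + d*(p*q)*(p*c)) := (absorb _ _ _ (mulrel (d*(p*q)) c d p hp).symm).symm
    _ = c*c + c*(c*p) + c*d + c*(d*p) + c*(d*(p*(p*q))) + d*(d*(p*q)) := by ac_rfl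
    _ = (c*c + c*(c*p) + c*d + c*(d*(p*(p*q)))) + (d*p*c + d*p*(q*d)) := by ac_rfl
    _ = ((c*c + c*(c*p) + c*d + c*(d*(p*(p*q)))) + (d*p*c + d*p*(q*d))) + (d*p*d + d*p*(q*c)) := absorb _ _ _ (mulrel (d*p) c d q hq)
    _ = c*c + c*(c*p) + c*d + c*(d*p) + c*(d*(p*(p*q))) + c*(d*(p*q)) + d*(d*p) + d*(d*(p*q)) := by ac_rfl
    _ = ((c*(d*(p*(p*q))) + c*(d*(p*q)) + d*(d*p) + d*(d*(p*q))) + (c*d + c*(p*c))) + (c*c + c*(p*d)) := by ac_rfl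
    _ = (c*(d*(p*(p*q))) + c*(d*(p*q)) + d*(d*p) + d*(d*(p*q))) + (c*d + c*(p*c)) := (absorb _ _ _ (mulrel (c) c d p hp).symm).symm
    _ = c*(c*p) + c*d + c*(d*(p*(p*q))) + c*(d*(p*q)) + d*(d*p) + d*(d*(p*q)) := by ac_rfl
    _ = (c*(c*p) + c*(d*(p*(p*q))) + c*(d*(p*q)) + d*(d*(p*q))) + (d*c + d*(p*d)) := by ac_rfl
    _ = ((c*(c*p) + c*(d*(p*(p*q))) + c*(d*(p*q)) + d*(d*(p*q))) + (d*c + d*(p*d))) + (d*d + d*(p*c)) := absorb _ _ _ (mulrel (d) c d p hp)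
    _ = c*(c*p) + c*d + c*(d*p) + c*(d*(p*(p*q))) + c*(d*(p*q)) + d*d + d*(d*p) + d*(d*(p*q)) := by ac_rfl
    _ = ((c*(c*p) + c*d + c*(d*(p*(p*q))) + d*d) + (d*p*d + d*p*(q*c))) + (d*p*c + d*p*(q*d)) := by ac_rfl
    _ = (c*(c*p) + c*d + c*(d*(p*(p*q))) + d*d) + (d*p*d + d*p*(q*c)) := (absorb _ _ _ (mulrel (d*p) c d q hq).symm).symm
    _ = c*(c*p) + c*d + c*(d*(p*(p*q))) + c*(d*(p*q)) + d*d + d*(d*p) := by ac_rfl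
    _ = (c*d + c*(d*(p*(p*q))) + d*d + d*(d*p)) + (c*p*c + c*p*(q*d)) := by ac_rfl
    _ = ((c*d + c*(d*(p*(p*q))) + d*d + d*(d*p)) + (c*p*c + c*p*(q*d))) + (c*p*d + c*p*(q*c)) := absorb _ _ _ (mulrel (c*p) c d q hq)
    _ = c*(c*p) + c*(c*(p*q)) + c*d + c*(d*p) + c*(d*(p*(p*q))) + c*(d*(p*q)) + d*d + d*(d*p) := by ac_rfl
    _ = ((c*d + c*(d*(p*(p*q))) + d*d + d*(d*p)) + (c*p*d + c*p*(q*c))) + (c*p*c + c*p*(q*d)) := by ac_rfl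
    _ = (c*d + c*(d*(p*(p*q))) + d*d + d*(d*p)) + (c*p*d + c*p*(q*c)) := (absorb _ _ _ (mulrel (c*p) c d q hq).symm).symm
    _ = c*(c*(p*q)) + c*d + c*(d*p) + c*(d*(p*(p*q))) + d*d + d*(d*p) := by ac_rfl
    _ = ((c*(c*(p*q)) + c*(d*(p*(p*q)))) + (d*c + d*(p*d))) + (d*d + d*(p*c)) := by ac_rfl
    _ = (c*(c*(p*q)) + c*(d*(p*(p*q)))) + (d*c + d*(p*d)) := (absorb _ _ _ (mulrel (d) c d p hp)).symm
    _ = c*(c*(p*q)) + c*d + c*(d*(p*(p*q))) + d*(d*p) := by ac_rfl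
    _ = d*c + (d*(p*d) + ((p*q*c)*c + (p*q*c)*(p*d))) := by ac_rfl
    _ = (d + p*q*c)*(c + p*d) := (expand2 _ _ _ _).symm

private lemma finf_le_trans {x y z : F} (h1 : x + y = y) (h2 : y + z = z) : x + z = z := by
  calc x + z = x + (y + z) := by rw [h2]
  _ = (x + y) + z := (FinfModule.add_assoc _ _ _).symm
  _ = y + z := by rw [h1]
  _ = z := h2

private lemma finf_le_mul2 {x x' y y' : F} (h1 : x + x' = x') (h2 : y + y' = y') :
    x*y + x'*y' = x'*y' := by
  have e := expand2 x x' y y'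
  rw [h1, h2] at e
  rw [e, ← FinfModule.add_assoc, FinfModule.add_idem]

end FinfAux

def fpow {F : Type*} [FinfCommAlgebra F] (m : F) : ℕ → F
  | 0 => 1
  | n+1 => fpow m n * m

section FinfAux2

variable {F : Type*} [FinfCommAlgebra F]

private lemma fpow_add (m : F) (k n : ℕ) : fpow m (k + n) = fpow m k * fpow m n := by
  induction n with
  | zero => rw [Nat.add_zero, show fpow m 0 = (1:F) from rfl, FinfUnitalAlgebra.mul_one]
  | succ n ih =>
      rw [show k + (n+1) = (k+n)+1 from rfl]
      show fpow m (k+n) * m = fpow m k * (fpow m n * m)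
      rw [ih, FinfAlgebra.mul_assoc]

private lemma one_le_fpow {m : F} (hm : 1 + m = m) : ∀ n, 1 + fpow m n = fpow m n
  | 0 => FinfModule.add_idem 1
  | n+1 => by
      have ih := one_le_fpow hm n
      show 1 + fpow m n * m = fpow m n * m
      have e := finf_le_mul2 ih hm
      rw [FinfUnitalAlgebra.one_mul] at e
      exact e

end FinfAux2

theorem stmt15 {F : Type*} [FinfCommAlgebra F]
    (hF : ∀ a : F, a ≠ 0 → ∃ b : F, a * b = 1)
    (a b c d : F) (h : a * c + b * d = a * d + b * c)
    (hab : a + b ≠ 0) (hcd : c + d ≠ 0) (x y : F)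
    (hxy : ∀ D : FinfCong F, D.rel a b → D.rel x y) :
    x * c + y * d = x * d + y * c := by
  -- basic consequences of being an F∞-field
  have one_ne : (1 : F) ≠ 0 := by
    intro h1
    apply hab
    calc a + b = (a+b)*1 := (FinfUnitalAlgebra.mul_one _).symm
    _ = (a+b)*0 := by rw [h1]
    _ = 0 := FinfAlgebra.mul_zero _
  have nzd : ∀ u v : F, u ≠ 0 → v ≠ 0 → u*v ≠ 0 := by
    intro u v hu hv huv
    obtain ⟨iu, hiu⟩ := hF u hu
    obtain ⟨iv, hiv⟩ := hF v hv
    apply one_ne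
    calc (1:F) = 1*1 := (FinfUnitalAlgebra.mul_one _).symm
    _ = (u*iu)*(v*iv) := by rw [hiu, hiv]
    _ = (u*v)*(iu*iv) := by ac_rfl
    _ = 0*(iu*iv) := by rw [huv]
    _ = 0 := FinfAlgebra.zero_mul _
  have cancel : ∀ u v z : F, z ≠ 0 → u*z = v*z → u = v := by
    intro u v z hz he
    obtain ⟨iz, hiz⟩ := hF z hz
    calc u = u*1 := (FinfUnitalAlgebra.mul_one _).symm
    _ = u*(z*iz) := by rw [hiz]
    _ = (u*z)*iz := (FinfAlgebra.mul_assoc _ _ _).symm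
    _ = (v*z)*iz := by rw [he]
    _ = v*(z*iz) := FinfAlgebra.mul_assoc _ _ _
    _ = v*1 := by rw [hiz]
    _ = v := FinfUnitalAlgebra.mul_one _
  have ha0 : a ≠ 0 := by
    intro h0; apply hab; rw [h0]; exact finf_zero_add b
  have hb0 : b ≠ 0 := by
    intro h0; apply hab; rw [h0]; exact finf_add_zero a
  obtain ⟨ia, hia⟩ := hF a ha0
  obtain ⟨ib, hib⟩ := hF b hb0
  set m : F := 1 + b*ia + a*ib with hm_def
  have hm1 : (1:F) + m = m := by
    calc (1:F) + (1 + b*ia + a*ib) = (1+1) + b*ia + a*ib := by ac_rfl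
    _ = 1 + b*ia + a*ib := by rw [FinfModule.add_idem]
  have e_m : m*(a*b) = (a+b)*(a+b) := by
    have dup : a*a + (a*b + (b*a + b*b)) = a*a + (a*b + b*b) := by
      rw [FinfCommAlgebra.mul_comm b a, ← FinfModule.add_assoc (a*b) (a*b) (b*b),
        FinfModule.add_idem]
    calc m*(a*b) = (1 + b*ia)*(a*b) + (a*ib)*(a*b) := FinfAlgebra.right_distrib _ _ _
    _ = (1*(a*b) + (b*ia)*(a*b)) + (a*ib)*(a*b) := by rw [FinfAlgebra.right_distrib]
    _ = (a*ia)*(b*b) + ((b*ib)*(a*a) + 1*(a*b)) := by ac_rfl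
    _ = 1*(b*b) + (1*(a*a) + 1*(a*b)) := by rw [hia, hib]
    _ = b*b + (a*a + a*b) := by
        rw [FinfUnitalAlgebra.one_mul, FinfUnitalAlgebra.one_mul, FinfUnitalAlgebra.one_mul]
    _ = a*a + (a*b + (b*a + b*b)) := by rw [dup]; ac_rfl
    _ = (a+b)*(a+b) := (expand2 a b a b).symm
  have hm0 : m ≠ 0 := by
    intro h0
    exact nzd (a+b) (a+b) hab hab (by rw [← e_m, h0, FinfAlgebra.zero_mul])
  have hf0 : ∀ n, fpow m n ≠ 0 := by
    intro n
    induction n with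
    | zero => exact one_ne
    | succ n ih => exact nzd _ _ ih hm0
  have hfone : ∀ n, (1:F) + fpow m n = fpow m n := one_le_fpow hm1
  have le_self_f : ∀ (z : F) (n : ℕ), z + z*fpow m n = z*fpow m n := by
    intro z n
    calc z + z*fpow m n = z*(1 + fpow m n) := by
          rw [FinfAlgebra.left_distrib, FinfUnitalAlgebra.mul_one]
    _ = z*fpow m n := by rw [hfone n]
  have zero_of : ∀ (s : F) (n : ℕ), s*fpow m n = 0 → s = 0 := by
    intro s n hs
    by_contra hne
    exact nzd s _ hne (hf0 n) hs
  -- D contains (a,b)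
  have e1m : fpow m 1 = m := by
    show (1:F)*m = m
    exact FinfUnitalAlgebra.one_mul m
  have ebm : b*m = a + (b + b*(b*ia)) := by
    calc b*m = b*(1 + b*ia) + b*(a*ib) := FinfAlgebra.left_distrib _ _ _
    _ = (b*1 + b*(b*ia)) + b*(a*ib) := by rw [FinfAlgebra.left_distrib]
    _ = (b + b*(b*ia)) + a*(b*ib) := by rw [FinfUnitalAlgebra.mul_one]; ac_rfl
    _ = (b + b*(b*ia)) + a*1 := by rw [hib]
    _ = a + (b + b*(b*ia)) := by rw [FinfUnitalAlgebra.mul_one]; ac_rfl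
  have eam : a*m = b + (a + a*(a*ib)) := by
    calc a*m = a*(1 + b*ia) + a*(a*ib) := FinfAlgebra.left_distrib _ _ _
    _ = (a*1 + a*(b*ia)) + a*(a*ib) := by rw [FinfAlgebra.left_distrib]
    _ = (a + b*(a*ia)) + a*(a*ib) := by rw [FinfUnitalAlgebra.mul_one]; ac_rfl
    _ = (a + b*1) + a*(a*ib) := by rw [hia]
    _ = b + (a + a*(a*ib)) := by rw [FinfUnitalAlgebra.mul_one]; ac_rfl
  have base1 : a + b*fpow m 1 = b*fpow m 1 := by
    rw [e1m]
    calc a + b*m = a + (a + (b + b*(b*ia))) := by rw [ebm]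
    _ = (a + a) + (b + b*(b*ia)) := (FinfModule.add_assoc _ _ _).symm
    _ = a + (b + b*(b*ia)) := by rw [FinfModule.add_idem]
    _ = b*m := ebm.symm
  have base2 : b + a*fpow m 1 = a*fpow m 1 := by
    rw [e1m]
    calc b + a*m = b + (b + (a + a*(a*ib))) := by rw [eam]
    _ = (b + b) + (a + a*(a*ib)) := (FinfModule.add_assoc _ _ _).symm
    _ = b + (a + a*(a*ib)) := by rw [FinfModule.add_idem]
    _ = a*m := eam.symm
  -- the congruence
  have hD := hxy
    { rel := fun u v => (u*c + v*d = u*d + v*c) ∧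
        ∃ n, (u + v*fpow m n = v*fpow m n) ∧ (v + u*fpow m n = u*fpow m n)
      refl := by
        intro z
        have hz : z + z*fpow m 0 = z*fpow m 0 := by
          rw [show fpow m 0 = (1:F) from rfl, FinfUnitalAlgebra.mul_one]
          exact FinfModule.add_idem z
        exact ⟨by ac_rfl, 0, hz, hz⟩
      symm := by
        rintro u v ⟨h1, n, h2, h3⟩
        refine ⟨?_, n, h3, h2⟩
        calc v*c + u*d = u*d + v*c := FinfModule.add_comm _ _
        _ = u*c + v*d := h1.symm
        _ = v*d + u*c := FinfModule.add_comm _ _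
      trans := by
        rintro u v w ⟨hR1, n, hx1, hx2⟩ ⟨hR2, k, hy1, hy2⟩
        constructor
        · -- relation part
          by_cases hu0 : u = 0
          · subst hu0
            have hv0 : v = 0 := by
              apply zero_of v n
              rw [← hx1]; exact finf_zero_add _
            subst hv0
            have hw0 : w = 0 := by
              apply zero_of w k
              rw [← hy1]; exact finf_zero_add _
            subst hw0
            rw [FinfAlgebra.zero_mul, FinfAlgebra.zero_mul]
          · have hv0 : v ≠ 0 := by
              intro h0
              apply hu0
              apply zero_of u n
              rw [h0] at hx2
              exact hx2.symm.trans (finf_zero_add _)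
            by_cases hw0 : w = 0
            · subst hw0
              rw [FinfAlgebra.zero_mul, FinfAlgebra.zero_mul, finf_add_zero, finf_add_zero]
            · obtain ⟨iu, hiu⟩ := hF u hu0
              obtain ⟨iv, hiv⟩ := hF v hv0
              have hp : c + (v*iu)*d = d + (v*iu)*c := by
                calc c + (v*iu)*d = c*1 + (v*iu)*d := by rw [FinfUnitalAlgebra.mul_one]
                _ = c*(u*iu) + (v*iu)*d := by rw [hiu]
                _ = (u*c)*iu + (v*d)*iu := by ac_rfl
                _ = (u*c + v*d)*iu := (FinfAlgebra.right_distrib _ _ _).symm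
                _ = (u*d + v*c)*iu := by rw [hR1]
                _ = (u*d)*iu + (v*c)*iu := FinfAlgebra.right_distrib _ _ _
                _ = d*(u*iu) + (v*iu)*c := by ac_rfl
                _ = d*1 + (v*iu)*c := by rw [hiu]
                _ = d + (v*iu)*c := by rw [FinfUnitalAlgebra.mul_one]
              have hq : c + (w*iv)*d = d + (w*iv)*c := by
                calc c + (w*iv)*d = c*1 + (w*iv)*d := by rw [FinfUnitalAlgebra.mul_one]
                _ = c*(v*iv) + (w*iv)*d := by rw [hiv]
                _ = (v*c)*iv + (w*d)*iv := by ac_rfl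
                _ = (v*c + w*d)*iv := (FinfAlgebra.right_distrib _ _ _).symm
                _ = (v*d + w*c)*iv := by rw [← hR2]
                _ = (v*d)*iv + (w*c)*iv := FinfAlgebra.right_distrib _ _ _
                _ = d*(v*iv) + (w*iv)*c := by ac_rfl
                _ = d*1 + (w*iv)*c := by rw [hiv]
                _ = d + (w*iv)*c := by rw [FinfUnitalAlgebra.mul_one]
              have huv : u + v ≠ 0 := by
                intro h0
                apply hu0
                apply zero_of u n
                have e : u*fpow m n + (u + v) = u*fpow m n := by
                  calc u*fpow m n + (u+v) = (u + u*fpow m n) + v := by ac_rfl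
                  _ = u*fpow m n + v := by rw [le_self_f u n]
                  _ = v + u*fpow m n := FinfModule.add_comm _ _
                  _ = u*fpow m n := hx2
                calc u*fpow m n = u*fpow m n + (u+v) := e.symm
                _ = u*fpow m n + 0 := by rw [h0]
                _ = 0 := finf_add_zero _
              have h1p : (1:F) + v*iu ≠ 0 := by
                intro h0
                apply huv
                calc u + v = 1*u + v*1 := by
                      rw [FinfUnitalAlgebra.one_mul, FinfUnitalAlgebra.mul_one]
                _ = 1*u + v*(u*iu) := by rw [hiu]
                _ = (1 + v*iu)*u := by rw [FinfAlgebra.right_distrib]; ac_rfl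
                _ = 0*u := by rw [h0]
                _ = 0 := FinfAlgebra.zero_mul _
              have esp : (c+d)*((1:F) + v*iu) = c + (v*iu)*d := by
                calc (c+d)*((1:F) + v*iu)
                    = c*1 + (c*(v*iu) + (d*1 + d*(v*iu))) := expand2 _ _ _ _
                _ = (c + (v*iu)*d) + (d + (v*iu)*c) := by
                      rw [FinfUnitalAlgebra.mul_one, FinfUnitalAlgebra.mul_one]; ac_rfl
                _ = (c + (v*iu)*d) + (c + (v*iu)*d) := by rw [← hp]
                _ = c + (v*iu)*d := FinfModule.add_idem _
              have hsp0 : c + (v*iu)*d ≠ 0 := by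
                intro h0
                exact nzd (c+d) _ hcd h1p (esp.trans h0)
              have hkey := finf_key c d (v*iu) (w*iv) hp hq
                (fun u' v' he => cancel u' v' _ hsp0 he)
              have hpq : u*((v*iu)*((w*iv)*d)) = w*d := by
                calc u*((v*iu)*((w*iv)*d)) = (w*d)*((u*iu)*(v*iv)) := by ac_rfl
                _ = (w*d)*(1*1) := by rw [hiu, hiv]
                _ = (w*d)*1 := by rw [FinfUnitalAlgebra.one_mul]
                _ = w*d := FinfUnitalAlgebra.mul_one _
              have hpq2 : u*((v*iu)*((w*iv)*c)) = w*c := by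
                calc u*((v*iu)*((w*iv)*c)) = (w*c)*((u*iu)*(v*iv)) := by ac_rfl
                _ = (w*c)*(1*1) := by rw [hiu, hiv]
                _ = (w*c)*1 := by rw [FinfUnitalAlgebra.one_mul]
                _ = w*c := FinfUnitalAlgebra.mul_one _
              have e2 : u*c + u*((v*iu)*((w*iv)*d)) = u*d + u*((v*iu)*((w*iv)*c)) := by
                calc u*c + u*((v*iu)*((w*iv)*d))
                    = u*(c + (v*iu)*(w*iv)*d) := by
                      rw [FinfAlgebra.left_distrib]; ac_rfl
                _ = u*(d + (v*iu)*(w*iv)*c) := by rw [hkey]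
                _ = u*d + u*((v*iu)*((w*iv)*c)) := by
                      rw [FinfAlgebra.left_distrib]; ac_rfl
              calc u*c + w*d = u*c + u*((v*iu)*((w*iv)*d)) := by rw [hpq]
              _ = u*d + u*((v*iu)*((w*iv)*c)) := e2
              _ = u*d + w*c := by rw [hpq2]
        · -- closeness part
          refine ⟨n + k, ?_, ?_⟩
          · have e0 : (v + w*fpow m k) * fpow m n = (w*fpow m k)*fpow m n := by
              rw [hy1]
            have e : v*fpow m n + w*fpow m (n+k) = w*fpow m (n+k) := by
              calc v*fpow m n + w*fpow m (n+k)
                  = v*fpow m n + (w*fpow m k)*fpow m n := by rw [fpow_add m n k]; ac_rfl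
              _ = (v + w*fpow m k)*fpow m n := (FinfAlgebra.right_distrib _ _ _).symm
              _ = (w*fpow m k)*fpow m n := e0
              _ = w*fpow m (n+k) := by rw [fpow_add m n k]; ac_rfl
            exact finf_le_trans hx1 e
          · have e0 : (v + u*fpow m n) * fpow m k = (u*fpow m n)*fpow m k := by
              rw [hx2]
            have e : v*fpow m k + u*fpow m (n+k) = u*fpow m (n+k) := by
              calc v*fpow m k + u*fpow m (n+k)
                  = v*fpow m k + (u*fpow m n)*fpow m k := by rw [fpow_add m n k]; ac_rfl
              _ = (v + u*fpow m n)*fpow m k := (FinfAlgebra.right_distrib _ _ _).symm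
              _ = (u*fpow m n)*fpow m k := e0
              _ = u*fpow m (n+k) := by rw [fpow_add m n k]; ac_rfl
            exact finf_le_trans hy2 e
      add_compat := by
        rintro u v e ⟨hR, n, h1, h2⟩
        refine ⟨?_, n, ?_, ?_⟩
        · calc (u+e)*c + (v+e)*d
              = (u*c + v*d) + (e*c + e*d) := by
                rw [FinfAlgebra.right_distrib, FinfAlgebra.right_distrib]; ac_rfl
          _ = (u*d + v*c) + (e*c + e*d) := by rw [hR]
          _ = (u+e)*d + (v+e)*c := by
                rw [FinfAlgebra.right_distrib, FinfAlgebra.right_distrib]; ac_rfl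
        · calc (u+e) + (v+e)*fpow m n
              = (u+e) + (v*fpow m n + e*fpow m n) := by rw [FinfAlgebra.right_distrib]
          _ = (u + v*fpow m n) + (e + e*fpow m n) := by ac_rfl
          _ = v*fpow m n + e*fpow m n := by rw [h1, le_self_f e n]
          _ = (v+e)*fpow m n := (FinfAlgebra.right_distrib _ _ _).symm
        · calc (v+e) + (u+e)*fpow m n
              = (v+e) + (u*fpow m n + e*fpow m n) := by rw [FinfAlgebra.right_distrib]
          _ = (v + u*fpow m n) + (e + e*fpow m n) := by ac_rfl
          _ = u*fpow m n + e*fpow m n := by rw [h2, le_self_f e n]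
          _ = (u+e)*fpow m n := (FinfAlgebra.right_distrib _ _ _).symm
      neg_compat := by
        rintro u v ⟨hR, n, h1, h2⟩
        refine ⟨?_, n, ?_, ?_⟩
        · calc (-u)*c + (-v)*d = -(u*c) + -(v*d) := by
                 rw [FinfAlgebra.neg_mul, FinfAlgebra.neg_mul]
          _ = -(u*c + v*d) := (FinfModule.neg_add _ _).symm
          _ = -(u*d + v*c) := by rw [hR]
          _ = (-u)*d + (-v)*c := by
              rw [FinfModule.neg_add, ← FinfAlgebra.neg_mul, ← FinfAlgebra.neg_mul]
        · calc -u + (-v)*fpow m n = -u + -(v*fpow m n) := by rw [FinfAlgebra.neg_mul]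
          _ = -(u + v*fpow m n) := (FinfModule.neg_add _ _).symm
          _ = -(v*fpow m n) := by rw [h1]
          _ = (-v)*fpow m n := (FinfAlgebra.neg_mul _ _).symm
        · calc -v + (-u)*fpow m n = -v + -(u*fpow m n) := by rw [FinfAlgebra.neg_mul]
          _ = -(v + u*fpow m n) := (FinfModule.neg_add _ _).symm
          _ = -(u*fpow m n) := by rw [h2]
          _ = (-u)*fpow m n := (FinfAlgebra.neg_mul _ _).symm
      mul_compat := by
        rintro u v e ⟨hR, n, h1, h2⟩
        refine ⟨?_, n, ?_, ?_⟩
        · calc (u*e)*c + (v*e)*d = (u*c)*e + (v*d)*e := by ac_rfl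
          _ = (u*c + v*d)*e := (FinfAlgebra.right_distrib _ _ _).symm
          _ = (u*d + v*c)*e := by rw [hR]
          _ = (u*d)*e + (v*c)*e := FinfAlgebra.right_distrib _ _ _
          _ = (u*e)*d + (v*e)*c := by ac_rfl
        · calc u*e + (v*e)*fpow m n = u*e + (v*fpow m n)*e := by ac_rfl
          _ = (u + v*fpow m n)*e := (FinfAlgebra.right_distrib _ _ _).symm
          _ = (v*fpow m n)*e := by rw [h1]
          _ = (v*e)*fpow m n := by ac_rfl
        · calc v*e + (u*e)*fpow m n = v*e + (u*fpow m n)*e := by ac_rfl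
          _ = (v + u*fpow m n)*e := (FinfAlgebra.right_distrib _ _ _).symm
          _ = (u*fpow m n)*e := by rw [h2]
          _ = (u*e)*fpow m n := by ac_rfl
      }
  exact (hD ⟨h, 1, base1, base2⟩).1
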